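/- arXiv:1407.2767 — 2 statements merged into one kernel-verified Lean document; each statement's English description precedes it below -/
import Mathlib

section
/- Let ρ be an elliptic N-function and for a ≥ 0 let ρ_a(t) := ∫₀ᵗ (ρ'(a+τ)/(a+τ))·τ dτ. Then uniformly in a, b, t ≥ 0, the twice-shifted function satisfies (ρ_a)_b(t) ∼ ρ_{a+b}(t), with implicit constants depending only on the characteristics of ρ. -/
open Set Filter

/-- An N-function: strictly increasing and convex on `[0,∞)`, vanishing at `0`,
with `ρ(t)/t → 0` as `t → 0⁺` and `t/ρ(t) → 0` as `t → ∞`. -/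
def IsNFunction (ρ : ℝ → ℝ) : Prop :=
  ρ 0 = 0 ∧ StrictMonoOn ρ (Ici 0) ∧ ConvexOn ℝ (Ici 0) ρ ∧
    Tendsto (fun t => ρ t / t) (nhdsWithin 0 (Ioi 0)) (nhds 0) ∧
    Tendsto (fun t => t / ρ t) atTop (nhds 0)

/-- The conjugate (Young/Legendre) function `ρ*(t) = sup_{s ≥ 0} (s t − ρ s)`. -/
noncomputable def conjN (ρ : ℝ → ℝ) (t : ℝ) : ℝ :=
  sSup {y | ∃ s ≥ 0, y = s * t - ρ s}

/-- The shifted N-function `ρ_a(t) = ∫₀ᵗ ρ'(a+τ)/(a+τ) · τ dτ`. -/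
noncomputable def shiftN (ρ : ℝ → ℝ) (a : ℝ) (t : ℝ) : ℝ :=
  ∫ τ in (0:ℝ)..t, deriv ρ (a + τ) / (a + τ) * τ

/-- An elliptic N-function with characteristics `c₁, c₂`: `C¹` on `[0,∞)`,
`C²` on `(0,∞)`, and `ρ'(t) ∼ t ρ''(t)` uniformly in `t > 0`. -/
def IsElliptic (ρ : ℝ → ℝ) (c₁ c₂ : ℝ) : Prop :=
  ContDiffOn ℝ 1 ρ (Ici 0) ∧ ContDiffOn ℝ 2 ρ (Ioi 0) ∧
    ∀ t > 0, c₁ * deriv ρ t ≤ t * deriv (deriv ρ) t ∧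
      t * deriv (deriv ρ) t ≤ c₂ * deriv ρ t

section Aux
open MeasureTheory
variable {ρ : ℝ → ℝ} {c₁ c₂ : ℝ}

lemma aux_contOn_deriv (hE : IsElliptic ρ c₁ c₂) : ContinuousOn (deriv ρ) (Ioi 0) :=
  hE.2.1.continuousOn_deriv_of_isOpen isOpen_Ioi (by norm_num)

lemma aux_diffOn_deriv (hE : IsElliptic ρ c₁ c₂) : DifferentiableOn ℝ (deriv ρ) (Ioi 0) := by
  have h := hE.2.1.deriv_of_isOpen isOpen_Ioi (m := 1) (by norm_num)
  exact h.differentiableOn (by norm_num)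

lemma aux_deriv_nonneg (hN : IsNFunction ρ) (hE : IsElliptic ρ c₁ c₂) {t : ℝ} (ht : 0 < t) :
    0 ≤ deriv ρ t := by
  have hd : HasDerivAt ρ (deriv ρ t) t := by
    have := (hE.2.1.contDiffAt (isOpen_Ioi.mem_nhds ht)).differentiableAt (by norm_num)
    exact this.hasDerivAt
  have hslope := hasDerivAt_iff_tendsto_slope.1 hd
  have hslope' : Tendsto (slope ρ t) (nhdsWithin t (Ioi t)) (nhds (deriv ρ t)) :=
    hslope.mono_left (nhdsWithin_mono t fun x hx => ne_of_gt hx)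
  refine ge_of_tendsto hslope' ?_
  filter_upwards [self_mem_nhdsWithin] with x hx
  have hx' : t < x := hx
  have := hN.2.1 (le_of_lt ht) (le_of_lt (ht.trans hx')) hx'
  rw [slope_def_field]
  exact div_nonneg (by linarith) (by linarith)

lemma aux_deriv_mono (hc₁ : 0 < c₁) (hN : IsNFunction ρ) (hE : IsElliptic ρ c₁ c₂) :
    MonotoneOn (deriv ρ) (Ioi 0) := by
  refine monotoneOn_of_deriv_nonneg (convex_Ioi 0) (aux_contOn_deriv hE) ?_ ?_
  · rw [interior_Ioi]; exact aux_diffOn_deriv hE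
  · intro x hx
    rw [interior_Ioi] at hx
    have h1 := (hE.2.2 x hx).1
    have h2 := aux_deriv_nonneg hN hE hx
    have hx' : 0 < x := hx
    nlinarith [hx', h1, h2]

lemma aux_f_contOn (hE : IsElliptic ρ c₁ c₂) {a : ℝ} (ha : 0 ≤ a) :
    ContinuousOn (fun τ => deriv ρ (a + τ) / (a + τ) * τ) (Ioi 0) := by
  have hmem : ∀ τ ∈ Ioi (0:ℝ), a + τ ∈ Ioi (0:ℝ) := fun τ hτ => by
    simp only [mem_Ioi] at *; linarith
  refine ContinuousOn.mul (ContinuousOn.div ?_ ?_ ?_) continuousOn_id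
  · exact (aux_contOn_deriv hE).comp ((continuous_const.add continuous_id).continuousOn) hmem
  · exact (continuous_const.add continuous_id).continuousOn
  · intro τ hτ; exact ne_of_gt (hmem τ hτ)

lemma aux_f_integrable (hc₁ : 0 < c₁) (hN : IsNFunction ρ) (hE : IsElliptic ρ c₁ c₂)
    {a s : ℝ} (ha : 0 ≤ a) (hs : 0 < s) :
    IntervalIntegrable (fun τ => deriv ρ (a + τ) / (a + τ) * τ) volume 0 s := by
  rw [intervalIntegrable_iff_integrableOn_Ioc_of_le hs.le]
  refine Integrable.mono' (g := fun _ => deriv ρ (a + s))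
    (integrableOn_const measure_Ioc_lt_top.ne) ?_ ?_
  · exact ((aux_f_contOn hE ha).mono Ioc_subset_Ioi_self).aestronglyMeasurable measurableSet_Ioc
  · rw [ae_restrict_iff' measurableSet_Ioc]
    filter_upwards with τ hτ
    obtain ⟨hτ0, hτs⟩ := hτ
    have haτ : 0 < a + τ := by linarith
    have has : 0 < a + s := by linarith
    have hmono := aux_deriv_mono hc₁ hN hE haτ has (by linarith)
    have hnn := aux_deriv_nonneg hN hE haτ
    have hnn2 := aux_deriv_nonneg hN hE has
    rw [Real.norm_eq_abs, abs_of_nonneg (by positivity)]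
    rw [div_mul_eq_mul_div, div_le_iff₀ haτ]
    nlinarith

lemma shift_hasDerivAt (hc₁ : 0 < c₁) (hN : IsNFunction ρ) (hE : IsElliptic ρ c₁ c₂)
    {a s : ℝ} (ha : 0 ≤ a) (hs : 0 < s) :
    HasDerivAt (shiftN ρ a) (deriv ρ (a + s) / (a + s) * s) s := by
  have hmem : s ∈ Ioi (0:ℝ) := hs
  have hcont : ContinuousAt (fun τ => deriv ρ (a + τ) / (a + τ) * τ) s :=
    (aux_f_contOn hE ha).continuousAt (isOpen_Ioi.mem_nhds hmem)
  exact intervalIntegral.integral_hasDerivAt_right (aux_f_integrable hc₁ hN hE ha hs)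
    (ContinuousOn.stronglyMeasurableAtFilter isOpen_Ioi (aux_f_contOn hE ha) s hmem) hcont

lemma shift_shift_eq (hc₁ : 0 < c₁) (hN : IsNFunction ρ) (hE : IsElliptic ρ c₁ c₂)
    {a b t : ℝ} (ha : 0 ≤ a) (hb : 0 ≤ b) (ht : 0 ≤ t) :
    shiftN (shiftN ρ a) b t = shiftN ρ (a + b) t := by
  show (∫ τ in (0:ℝ)..t, deriv (shiftN ρ a) (b + τ) / (b + τ) * τ)
      = ∫ τ in (0:ℝ)..t, deriv ρ ((a + b) + τ) / ((a + b) + τ) * τ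
  refine intervalIntegral.integral_congr fun τ hτ => ?_
  rw [uIcc_of_le ht] at hτ
  rcases eq_or_lt_of_le hτ.1 with h0 | h0
  · simp [← h0]
  · have hbτ : 0 < b + τ := by linarith
    have hd := (shift_hasDerivAt hc₁ hN hE ha hbτ).deriv
    simp only [hd]
    rw [mul_div_cancel_right₀ _ (ne_of_gt hbτ), ← add_assoc]

end Aux

/-- iterated shift. For an elliptic N-function `ρ`, uniformly in
`a, b, t ≥ 0` the twice-shifted function satisfies `(ρ_a)_b(t) ∼ ρ_{a+b}(t)`,
with constants depending only on the characteristics of `ρ`. -/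
theorem statement5 (ρ : ℝ → ℝ) (c₁ c₂ : ℝ) (hc₁ : 0 < c₁) (hc₂ : 0 < c₂)
    (hN : IsNFunction ρ) (hE : IsElliptic ρ c₁ c₂) :
    ∃ C > 0, ∀ a ≥ (0:ℝ), ∀ b ≥ (0:ℝ), ∀ t ≥ (0:ℝ),
      shiftN (shiftN ρ a) b t ≤ C * shiftN ρ (a + b) t ∧
      shiftN ρ (a + b) t ≤ C * shiftN (shiftN ρ a) b t := by
  refine ⟨1, one_pos, fun a ha b hb t ht => ?_⟩
  have key := shift_shift_eq hc₁ hN hE ha hb ht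
  rw [key, one_mul]
  exact ⟨le_rfl, le_rfl⟩
end

section
/- Let ρ be an elliptic N-function. Then for each δ > 0 there exists C_δ ≥ 1, depending only on δ and the characteristics of ρ, such that for all vectors a, b ∈ ℝⁿ and all t ≥ 0: ρ_{|a|}(t) ≤ C_δ ρ_{|b|}(t) + δ ρ_{|a|}(|a − b|). -/
open Set Filter

variable {ρ : ℝ → ℝ} {c₁ c₂ : ℝ}

lemma fC1 (hE : IsElliptic ρ c₁ c₂) : ContDiffOn ℝ 1 (deriv ρ) (Ioi 0) :=
  hE.2.1.deriv_of_isOpen isOpen_Ioi (by norm_num)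

lemma fHasDeriv (hE : IsElliptic ρ c₁ c₂) {x : ℝ} (hx : 0 < x) :
    HasDerivAt (deriv ρ) (deriv (deriv ρ) x) x := by
  have := ((fC1 hE).differentiableOn (by norm_num)).differentiableAt
    (isOpen_Ioi.mem_nhds hx)
  exact this.hasDerivAt

lemma rhoHasDeriv (hE : IsElliptic ρ c₁ c₂) {x : ℝ} (hx : 0 < x) :
    HasDerivAt ρ (deriv ρ x) x := by
  have := (hE.2.1.differentiableOn (by norm_num)).differentiableAt
    (isOpen_Ioi.mem_nhds hx)
  exact this.hasDerivAt

lemma fnonneg (hN : IsNFunction ρ) (hE : IsElliptic ρ c₁ c₂) {x : ℝ} (hx : 0 < x) :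
    0 ≤ deriv ρ x := by
  have hd := rhoHasDeriv hE hx
  have h1 : Tendsto (slope ρ x) (nhdsWithin x (Ioi x)) (nhds (deriv ρ x)) := by
    have := (hasDerivWithinAt_iff_tendsto_slope' (s := Ioi x) (f := ρ) (x := x)
      (f' := deriv ρ x) (by simp)).1 (hd.hasDerivWithinAt)
    exact this
  refine ge_of_tendsto h1 ?_
  filter_upwards [self_mem_nhdsWithin] with y hy
  have h2 : ρ x < ρ y := hN.2.1 (le_of_lt hx) (le_of_lt (hx.trans hy)) hy
  have h3 : 0 < y - x := sub_pos.2 hy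
  rw [slope_def_field]
  have : 0 < ρ y - ρ x := sub_pos.2 h2
  positivity

lemma fmono (hN : IsNFunction ρ) (hE : IsElliptic ρ c₁ c₂) (hc₁ : 0 < c₁) :
    MonotoneOn (deriv ρ) (Ioi 0) := by
  refine monotoneOn_of_deriv_nonneg (convex_Ioi 0) ((fC1 hE).continuousOn) ?_ ?_
  · rw [interior_Ioi]
    exact (fC1 hE).differentiableOn (by norm_num)
  · rw [interior_Ioi]
    intro x hx
    have h1 := (hE.2.2 x hx).1
    have h2 : 0 ≤ c₁ * deriv ρ x := mul_nonneg hc₁.le (fnonneg hN hE hx)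
    have h3 : 0 ≤ x * deriv (deriv ρ) x := h2.trans h1
    have hx0 : (0:ℝ) < x := hx
    nlinarith [h3, hx0, mul_pos hx0 hx0]

lemma fdoubling (hN : IsNFunction ρ) (hE : IsElliptic ρ c₁ c₂) (hc₂ : 0 < c₂)
    {u v : ℝ} (hu : 0 < u) (huv : u ≤ v) :
    deriv ρ v ≤ (v / u) ^ c₂ * deriv ρ u := by
  have hv : 0 < v := hu.trans_le huv
  -- g x = deriv ρ x * x ^ (-c₂) is antitone on Ioi 0
  have key : AntitoneOn (fun x : ℝ => deriv ρ x * x ^ (-c₂)) (Ioi 0) := by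
    have hder : ∀ x ∈ Ioi (0:ℝ), HasDerivAt (fun x : ℝ => deriv ρ x * x ^ (-c₂))
        (deriv (deriv ρ) x * x ^ (-c₂) + deriv ρ x * (-c₂ * x ^ (-c₂ - 1))) x := by
      intro x hx
      exact (fHasDeriv hE hx).mul (Real.hasDerivAt_rpow_const (Or.inl (ne_of_gt hx)))
    refine antitoneOn_of_deriv_nonpos (convex_Ioi 0) ?_ ?_ ?_
    · intro x hx
      exact ((hder x hx).continuousAt).continuousWithinAt
    · rw [interior_Ioi]; intro x hx; exact ((hder x hx).differentiableAt).differentiableWithinAt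
    · rw [interior_Ioi]; intro x hx
      rw [(hder x hx).deriv]
      have hx0 : (0:ℝ) < x := hx
      have h2 := (hE.2.2 x hx0).2
      have hxp : (0:ℝ) < x ^ (-c₂ - 1) := Real.rpow_pos_of_pos hx0 _
      have hxe : x ^ (-c₂) = x * x ^ (-c₂ - 1) := by
        rw [show -c₂ = 1 + (-c₂ - 1) by ring, Real.rpow_add hx0, Real.rpow_one]
        norm_num
      rw [hxe]
      nlinarith [mul_nonneg (sub_nonneg.2 h2) hxp.le]
  have := key (mem_Ioi.2 hu) (mem_Ioi.2 hv) huv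
  dsimp only at this
  -- deriv ρ v * v ^ (-c₂) ≤ deriv ρ u * u ^ (-c₂)
  have hvp : (0:ℝ) < v ^ c₂ := Real.rpow_pos_of_pos hv _
  have hup : (0:ℝ) < u ^ c₂ := Real.rpow_pos_of_pos hu _
  rw [Real.div_rpow hv.le hu.le]
  rw [Real.rpow_neg hv.le, Real.rpow_neg hu.le] at this
  calc deriv ρ v = deriv ρ v * (v ^ c₂)⁻¹ * v ^ c₂ := by field_simp
    _ ≤ deriv ρ u * (u ^ c₂)⁻¹ * v ^ c₂ := by
        apply mul_le_mul_of_nonneg_right this hvp.le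
    _ = v ^ c₂ / u ^ c₂ * deriv ρ u := by field_simp


lemma phi_mono (hN : IsNFunction ρ) (hE : IsElliptic ρ c₁ c₂) (hc₁ : 0 < c₁)
    {a t : ℝ} (ha : 0 ≤ a) (ht : 0 ≤ t) :
    MonotoneOn (fun τ => deriv ρ (a + τ) / (a + τ) * τ) (Icc 0 t) := by
  intro x hx y hy hxy
  simp only
  rcases eq_or_lt_of_le hx.1 with h0 | h0
  · -- x = 0
    rw [← h0]
    simp only [mul_zero]
    rcases eq_or_lt_of_le (hx.1.trans hxy) with h1 | h1
    · rw [← h1]; simp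
    · have hay : 0 < a + y := by linarith
      have := fnonneg hN hE hay
      positivity
  · have hax : 0 < a + x := by linarith
    have hay : 0 < a + y := by linarith
    have hxy' : a + x ≤ a + y := by linarith
    have hf := fmono hN hE hc₁ (mem_Ioi.2 hax) (mem_Ioi.2 hay) hxy'
    have hfx := fnonneg hN hE hax
    have h1 : x / (a + x) ≤ y / (a + y) := by
      rw [div_le_div_iff₀ hax hay]
      nlinarith
    have h2 : deriv ρ (a + x) / (a + x) * x = deriv ρ (a + x) * (x / (a + x)) := by ring
    have h3 : deriv ρ (a + y) / (a + y) * y = deriv ρ (a + y) * (y / (a + y)) := by ring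
    rw [h2, h3]
    apply mul_le_mul hf h1 (by positivity) (fnonneg hN hE hay)

lemma phi_intable (hN : IsNFunction ρ) (hE : IsElliptic ρ c₁ c₂) (hc₁ : 0 < c₁)
    {a t : ℝ} (ha : 0 ≤ a) (ht : 0 ≤ t) :
    IntervalIntegrable (fun τ => deriv ρ (a + τ) / (a + τ) * τ) MeasureTheory.volume 0 t := by
  apply MonotoneOn.intervalIntegrable
  rw [uIcc_of_le ht]
  exact phi_mono hN hE hc₁ ha ht

lemma phi_nonneg (hN : IsNFunction ρ) (hE : IsElliptic ρ c₁ c₂)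
    {a τ : ℝ} (ha : 0 ≤ a) (hτ : 0 ≤ τ) :
    0 ≤ deriv ρ (a + τ) / (a + τ) * τ := by
  rcases eq_or_lt_of_le hτ with h | h
  · rw [← h]; simp
  · have h2 : 0 < a + τ := by linarith
    have := fnonneg hN hE h2
    positivity

lemma shift_nonneg (hN : IsNFunction ρ) (hE : IsElliptic ρ c₁ c₂)
    {a t : ℝ} (ha : 0 ≤ a) (ht : 0 ≤ t) : 0 ≤ shiftN ρ a t := by
  rw [shiftN]
  apply intervalIntegral.integral_nonneg ht
  intro u hu
  exact phi_nonneg hN hE ha hu.1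

lemma shift_upper (hN : IsNFunction ρ) (hE : IsElliptic ρ c₁ c₂) (hc₁ : 0 < c₁)
    {a t : ℝ} (ha : 0 ≤ a) (ht : 0 ≤ t) :
    shiftN ρ a t * (a + t) ≤ deriv ρ (a + t) * t ^ 2 := by
  rcases eq_or_lt_of_le ht with h | h
  · rw [← h]; simp [shiftN]
  have hat : 0 < a + t := by linarith
  have key : shiftN ρ a t ≤ deriv ρ (a + t) / (a + t) * t * t := by
    rw [shiftN]
    calc (∫ τ in (0:ℝ)..t, deriv ρ (a + τ) / (a + τ) * τ)
        ≤ ∫ _ in (0:ℝ)..t, deriv ρ (a + t) / (a + t) * t := by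
          apply intervalIntegral.integral_mono_on ht (phi_intable hN hE hc₁ ha ht)
            intervalIntegrable_const
          intro x hx
          exact phi_mono hN hE hc₁ ha ht hx (right_mem_Icc.2 ht) hx.2
      _ = deriv ρ (a + t) / (a + t) * t * t := by
          rw [intervalIntegral.integral_const, smul_eq_mul]; ring
  calc shiftN ρ a t * (a + t) ≤ deriv ρ (a + t) / (a + t) * t * t * (a + t) :=
        mul_le_mul_of_nonneg_right key hat.le
    _ = deriv ρ (a + t) * t ^ 2 := by field_simp

lemma shift_lower (hN : IsNFunction ρ) (hE : IsElliptic ρ c₁ c₂) (hc₁ : 0 < c₁) (hc₂ : 0 < c₂)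
    {a t : ℝ} (ha : 0 ≤ a) (ht : 0 ≤ t) :
    deriv ρ (a + t) * t ^ 2 ≤ (2:ℝ) ^ c₂ * 4 * (shiftN ρ a t * (a + t)) := by
  rcases eq_or_lt_of_le ht with h | h
  · rw [← h]; simp [shiftN]
  have hat : 0 < a + t := by linarith
  have hat2 : 0 < a + t / 2 := by linarith
  -- split the integral
  have hint1 := phi_intable hN hE hc₁ ha (by linarith : (0:ℝ) ≤ t / 2)
  have hint2 : IntervalIntegrable (fun τ => deriv ρ (a + τ) / (a + τ) * τ)
      MeasureTheory.volume (t/2) t := by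
    apply MonotoneOn.intervalIntegrable
    apply (phi_mono hN hE hc₁ ha ht).mono
    rw [uIcc_of_le (by linarith)]
    exact Icc_subset_Icc (by linarith) le_rfl
  have hsplit : shiftN ρ a t = (∫ τ in (0:ℝ)..(t/2), deriv ρ (a + τ) / (a + τ) * τ)
      + ∫ τ in (t/2)..t, deriv ρ (a + τ) / (a + τ) * τ := by
    rw [shiftN, ← intervalIntegral.integral_add_adjacent_intervals hint1 hint2]
  have h1 : 0 ≤ ∫ τ in (0:ℝ)..(t/2), deriv ρ (a + τ) / (a + τ) * τ := by
    apply intervalIntegral.integral_nonneg (by linarith)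
    intro u hu; exact phi_nonneg hN hE ha hu.1
  have h2 : (∫ _ in (t/2)..t, deriv ρ (a + t/2) / (a + t) * (t/2))
      ≤ ∫ τ in (t/2)..t, deriv ρ (a + τ) / (a + τ) * τ := by
    apply intervalIntegral.integral_mono_on (by linarith) intervalIntegrable_const hint2
    intro x hx
    have hx1 : t/2 ≤ x := hx.1
    have hx2 : x ≤ t := hx.2
    have hax : 0 < a + x := by linarith
    have hmono := fmono hN hE hc₁ (mem_Ioi.2 hat2) (mem_Ioi.2 hax) (by linarith)
    have hfn : 0 ≤ deriv ρ (a + t/2) := fnonneg hN hE hat2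
    have hfx : 0 ≤ deriv ρ (a + x) := fnonneg hN hE hax
    have hdiv : deriv ρ (a + t/2) / (a + t) ≤ deriv ρ (a + x) / (a + x) :=
      div_le_div₀ hfx hmono hax (by linarith)
    apply mul_le_mul hdiv hx1 (by linarith) (by positivity)
  have h3 : (∫ _ in (t/2)..t, deriv ρ (a + t/2) / (a + t) * (t/2)) = deriv ρ (a + t/2) / (a + t) * (t/2) * (t/2) := by
    rw [intervalIntegral.integral_const, smul_eq_mul]; ring_nf
  have h4 : deriv ρ (a + t/2) * t^2 / 4 ≤ shiftN ρ a t * (a + t) := by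
    have h5 : deriv ρ (a + t/2) / (a + t) * (t/2) * (t/2) ≤ shiftN ρ a t := by
      rw [hsplit, ← h3]; linarith
    have h6 := mul_le_mul_of_nonneg_right h5 hat.le
    calc deriv ρ (a + t/2) * t^2 / 4 = deriv ρ (a + t/2) / (a + t) * (t/2) * (t/2) * (a + t) := by
          field_simp; ring
      _ ≤ shiftN ρ a t * (a + t) := h6
  have hdbl : deriv ρ (a + t) ≤ (2:ℝ) ^ c₂ * deriv ρ (a + t/2) := by
    have hd := fdoubling hN hE hc₂ hat2 (by linarith : a + t/2 ≤ a + t)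
    have hr : ((a + t) / (a + t/2) : ℝ) ^ c₂ ≤ (2:ℝ) ^ c₂ := by
      apply Real.rpow_le_rpow (by positivity) _ hc₂.le
      rw [div_le_iff₀ hat2]; linarith
    have hfn : 0 ≤ deriv ρ (a + t/2) := fnonneg hN hE hat2
    calc deriv ρ (a + t) ≤ ((a + t) / (a + t/2)) ^ c₂ * deriv ρ (a + t/2) := hd
      _ ≤ (2:ℝ) ^ c₂ * deriv ρ (a + t/2) := mul_le_mul_of_nonneg_right hr hfn
  have h2c : (0:ℝ) < (2:ℝ) ^ c₂ := Real.rpow_pos_of_pos (by norm_num) _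
  calc deriv ρ (a + t) * t^2 ≤ ((2:ℝ) ^ c₂ * deriv ρ (a + t/2)) * t^2 :=
        mul_le_mul_of_nonneg_right hdbl (by positivity)
    _ = (2:ℝ) ^ c₂ * 4 * (deriv ρ (a + t/2) * t^2 / 4) := by ring
    _ ≤ (2:ℝ) ^ c₂ * 4 * (shiftN ρ a t * (a + t)) := by
        apply mul_le_mul_of_nonneg_left h4 (by positivity)

lemma fdouble2 (hN : IsNFunction ρ) (hE : IsElliptic ρ c₁ c₂) (hc₂ : 0 < c₂)
    {u v : ℝ} (hu : 0 < u) (huv : u ≤ v) (h2 : v ≤ 2 * u) :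
    deriv ρ v ≤ (2:ℝ) ^ c₂ * deriv ρ u := by
  have hd := fdoubling hN hE hc₂ hu huv
  have hr : ((v / u) : ℝ) ^ c₂ ≤ (2:ℝ) ^ c₂ := by
    apply Real.rpow_le_rpow (div_nonneg (hu.le.trans huv) hu.le) _ hc₂.le
    rw [div_le_iff₀ hu]; linarith
  have hfn : 0 ≤ deriv ρ u := fnonneg hN hE hu
  calc deriv ρ v ≤ (v / u) ^ c₂ * deriv ρ u := hd
    _ ≤ (2:ℝ) ^ c₂ * deriv ρ u := mul_le_mul_of_nonneg_right hr hfn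

set_option maxHeartbeats 2000000 in
/-- Change of shift. For an elliptic N-function `ρ` and every
`δ > 0` there is `C_δ ≥ 1` (depending only on `δ` and the characteristics of `ρ`)
with `ρ_{|a|}(t) ≤ C_δ ρ_{|b|}(t) + δ ρ_{|a|}(|a − b|)` for all vectors
`a, b ∈ ℝⁿ` and all `t ≥ 0`. -/
theorem statement6 (n : ℕ) (ρ : ℝ → ℝ) (c₁ c₂ : ℝ) (hc₁ : 0 < c₁) (hc₂ : 0 < c₂)
    (hN : IsNFunction ρ) (hE : IsElliptic ρ c₁ c₂) (δ : ℝ) (hδ : 0 < δ) :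
    ∃ C ≥ (1:ℝ), ∀ a b : EuclideanSpace ℝ (Fin n), ∀ t ≥ (0:ℝ),
      shiftN ρ ‖a‖ t ≤ C * shiftN ρ ‖b‖ t + δ * shiftN ρ ‖a‖ ‖a - b‖ := by
  set K : ℝ := (2:ℝ) ^ c₂ with hKdef
  have hK0 : 0 < K := Real.rpow_pos_of_pos (by norm_num) _
  have hK1 : 1 ≤ K := Real.one_le_rpow (by norm_num) hc₂.le
  set μ : ℝ := min (1/4) (δ/(64*K*K*K)) with hμdef
  have hK2 : (0:ℝ) < K*K := mul_pos hK0 hK0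
  have h24 : (0:ℝ) < 24*K*K := by nlinarith [hK2]
  have h64 : (0:ℝ) < 64*K*K*K := by nlinarith [mul_pos hK2 hK0]
  have hμ0 : 0 < μ := lt_min (by norm_num) (div_pos hδ h64)
  have hμ4 : μ ≤ 1/4 := min_le_left _ _
  have hμδ : 64*K*K*K*μ ≤ δ := by
    have := min_le_right (1/4) (δ/(64*K*K*K))
    calc 64*K*K*K*μ ≤ 64*K*K*K*(δ/(64*K*K*K)) := by
          apply mul_le_mul_of_nonneg_left this h64.le
      _ = δ := by field_simp
  set lam : ℝ := 4 + Real.sqrt (24*K*K/δ) with hlamdef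
  have hsq : 0 ≤ Real.sqrt (24*K*K/δ) := Real.sqrt_nonneg _
  have hlam4 : 4 ≤ lam := by rw [hlamdef]; linarith
  have hlamδ : 24*K*K ≤ δ * (lam - 1)^2 := by
    have h1 : Real.sqrt (24*K*K/δ) ≤ lam - 1 := by rw [hlamdef]; linarith
    have h2 : 24*K*K/δ = (Real.sqrt (24*K*K/δ))^2 := (Real.sq_sqrt (le_of_lt (div_pos h24 hδ))).symm
    have h3 : (Real.sqrt (24*K*K/δ))^2 ≤ (lam - 1)^2 := by nlinarith
    have h4 : 24*K*K/δ ≤ (lam-1)^2 := by rw [h2]; exact h3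
    have h5 := (div_le_iff₀ hδ).1 h4
    nlinarith [h5]
  have hlam1 : (1:ℝ) ≤ lam ^ c₂ := Real.one_le_rpow (by linarith) hc₂.le
  clear_value K μ lam
  refine ⟨max 1 (4*K*(lam ^ c₂)/μ), le_max_left _ _, ?_⟩
  set C := max 1 (4*K*(lam ^ c₂)/μ) with hCdef
  have hlamc0 : (0:ℝ) < lam ^ c₂ := by linarith
  have hC0 : (0:ℝ) < C := lt_of_lt_of_le one_pos (le_max_left _ _)
  intro a b t ht
  have hα : (0:ℝ) ≤ ‖a‖ := norm_nonneg _
  have hβ : (0:ℝ) ≤ ‖b‖ := norm_nonneg _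
  have hs0 : (0:ℝ) ≤ ‖a - b‖ := norm_nonneg _
  set α := ‖a‖
  set β := ‖b‖
  set s := ‖a - b‖
  have habs : |α - β| ≤ s := abs_norm_sub_norm_le a b
  have hs1 : α - β ≤ s := (abs_le.1 habs).2
  have hs2 : β - α ≤ s := by have := (abs_le.1 habs).1; linarith
  have hYnn : 0 ≤ shiftN ρ α s := shift_nonneg hN hE hα hs0
  have hXβ : 0 ≤ shiftN ρ β t := shift_nonneg hN hE hβ ht
  have hXnn : 0 ≤ shiftN ρ α t := shift_nonneg hN hE hα ht
  have hCXβ : 0 ≤ C * shiftN ρ β t := mul_nonneg hC0.le hXβ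
  have hδY : 0 ≤ δ * shiftN ρ α s := mul_nonneg hδ.le hYnn
  rcases eq_or_lt_of_le ht with h0 | h0
  · have hz : shiftN ρ α t = 0 := by rw [← h0]; simp [shiftN]
    rw [hz]; linarith
  have hA : 0 < α + t := by linarith
  have hB : 0 < β + t := by linarith
  rcases lt_or_ge (α + t) (μ * (β + t)) with hc3 | hge
  · -- Branch 3 : β much larger than α and t
    have hq : μ*(β+t) ≤ (1/4)*(β+t) := mul_le_mul_of_nonneg_right hμ4 hB.le
    have hβ3 : 3*t < β := by linarith
    have hβpos : 0 < β := by linarith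
    have hB2 : β + t ≤ 2*β := by linarith
    have hq2 : μ*(β+t) ≤ μ*(2*β) := mul_le_mul_of_nonneg_left hB2 hμ0.le
    have hα2 : α < 2*μ*β := by linarith
    have hq3 : 2*μ*β ≤ 2*(1/4)*β := by
      have := mul_le_mul_of_nonneg_right hμ4 hβ
      linarith
    have hαβ2 : α ≤ β/2 := by linarith
    have hsβ : β/2 ≤ s := by linarith
    have hspos : 0 < s := by linarith
    have hαs : α ≤ s := by linarith
    have htμ : t ≤ 2*μ*β := by linarith
    have hG : 0 ≤ deriv ρ β := fnonneg hN hE hβpos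
    have u1 := shift_upper hN hE hc₁ hα ht
    have hmon1 : deriv ρ (α+t) ≤ deriv ρ (β+t) :=
      fmono hN hE hc₁ (mem_Ioi.2 hA) (mem_Ioi.2 hB) (by linarith)
    have hfbt : deriv ρ (β+t) ≤ K * deriv ρ β := by
      rw [hKdef]; exact fdouble2 hN hE hc₂ hβpos (by linarith) (by linarith)
    have B1 : shiftN ρ α t ≤ K * deriv ρ β * t := by
      have e : shiftN ρ α t * t ≤ (K * deriv ρ β * t) * t := by
        calc shiftN ρ α t * t ≤ shiftN ρ α t * (α+t) :=
              mul_le_mul_of_nonneg_left (by linarith) hXnn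
          _ ≤ deriv ρ (α+t) * t^2 := u1
          _ ≤ deriv ρ (β+t) * t^2 := mul_le_mul_of_nonneg_right hmon1 (sq_nonneg t)
          _ ≤ (K * deriv ρ β) * t^2 := mul_le_mul_of_nonneg_right hfbt (sq_nonneg t)
          _ = (K * deriv ρ β * t) * t := by ring
      exact le_of_mul_le_mul_right e h0
    have l1 := shift_lower hN hE hc₁ hc₂ hα hs0
    rw [← hKdef] at l1
    have hhalf : (0:ℝ) < β/2 := by linarith
    have hfhalf : deriv ρ β ≤ K * deriv ρ (β/2) := by
      rw [hKdef]; exact fdouble2 hN hE hc₂ hhalf (by linarith) (by linarith)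
    have hmon2 : deriv ρ (β/2) ≤ deriv ρ (α+s) :=
      fmono hN hE hc₁ (mem_Ioi.2 hhalf) (mem_Ioi.2 (by linarith)) (by linarith)
    have hGh : 0 ≤ deriv ρ (β/2) := fnonneg hN hE hhalf
    have e1 : deriv ρ β * s * s ≤ (8*K*K*(shiftN ρ α s)) * s := by
      calc deriv ρ β * s * s = deriv ρ β * s^2 := by ring
        _ ≤ (K * deriv ρ (β/2)) * s^2 := mul_le_mul_of_nonneg_right hfhalf (sq_nonneg s)
        _ ≤ (K * deriv ρ (α+s)) * s^2 := by
            apply mul_le_mul_of_nonneg_right _ (sq_nonneg s)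
            exact mul_le_mul_of_nonneg_left hmon2 hK0.le
        _ = K * (deriv ρ (α+s) * s^2) := by ring
        _ ≤ K * (K * 4 * (shiftN ρ α s * (α+s))) := mul_le_mul_of_nonneg_left l1 hK0.le
        _ ≤ K * (K * 4 * (shiftN ρ α s * (2*s))) := by
            apply mul_le_mul_of_nonneg_left _ hK0.le
            apply mul_le_mul_of_nonneg_left _ (mul_nonneg hK0.le (by norm_num))
            exact mul_le_mul_of_nonneg_left (by linarith) hYnn
        _ = (8*K*K*(shiftN ρ α s)) * s := by ring
    have e2 : deriv ρ β * s ≤ 8*K*K*(shiftN ρ α s) := le_of_mul_le_mul_right e1 hspos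
    have B3 : deriv ρ β * β ≤ 16*K*K*(shiftN ρ α s) := by
      calc deriv ρ β * β ≤ deriv ρ β * (2*s) := mul_le_mul_of_nonneg_left (by linarith) hG
        _ = 2*(deriv ρ β * s) := by ring
        _ ≤ 2*(8*K*K*(shiftN ρ α s)) := by linarith
        _ = 16*K*K*(shiftN ρ α s) := by ring
    have hfin : shiftN ρ α t ≤ δ * shiftN ρ α s := by
      calc shiftN ρ α t ≤ K * deriv ρ β * t := B1
        _ ≤ K * deriv ρ β * (2*μ*β) :=
            mul_le_mul_of_nonneg_left htμ (mul_nonneg hK0.le hG)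
        _ = 2*μ*K*(deriv ρ β * β) := by ring
        _ ≤ 2*μ*K*(16*K*K*(shiftN ρ α s)) := by
            apply mul_le_mul_of_nonneg_left B3 (by positivity)
        _ = (64*K*K*K*μ)*(shiftN ρ α s)/2 := by ring
        _ ≤ δ * shiftN ρ α s := by
            have := mul_le_mul_of_nonneg_right hμδ hYnn
            linarith
    linarith
  rcases le_or_gt (α + t) (lam * (β + t)) with hb1 | hc2
  · -- Branch 1 : comparable shifts
    have u1 := shift_upper hN hE hc₁ hα ht
    have l1 := shift_lower hN hE hc₁ hc₂ hβ ht
    rw [← hKdef] at l1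
    have hfB : 0 ≤ deriv ρ (β+t) := fnonneg hN hE hB
    have hfA : deriv ρ (α+t) ≤ lam ^ c₂ * deriv ρ (β+t) := by
      rcases le_total (α+t) (β+t) with hle | hle
      · have hm := fmono hN hE hc₁ (mem_Ioi.2 hA) (mem_Ioi.2 hB) hle
        calc deriv ρ (α+t) ≤ deriv ρ (β+t) := hm
          _ = 1 * deriv ρ (β+t) := (one_mul _).symm
          _ ≤ lam ^ c₂ * deriv ρ (β+t) := mul_le_mul_of_nonneg_right hlam1 hfB
      · have hd := fdoubling hN hE hc₂ hB hle
        have hr : ((α+t)/(β+t)) ^ c₂ ≤ lam ^ c₂ := by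
          apply Real.rpow_le_rpow (div_nonneg hA.le hB.le) _ hc₂.le
          rw [div_le_iff₀ hB]; linarith
        calc deriv ρ (α+t) ≤ ((α+t)/(β+t)) ^ c₂ * deriv ρ (β+t) := hd
          _ ≤ lam ^ c₂ * deriv ρ (β+t) := mul_le_mul_of_nonneg_right hr hfB
    have key : shiftN ρ α t * (μ*(β+t)) ≤ (4*K*(lam ^ c₂) * shiftN ρ β t) * (β+t) := by
      calc shiftN ρ α t * (μ*(β+t)) ≤ shiftN ρ α t * (α+t) :=
            mul_le_mul_of_nonneg_left hge hXnn
        _ ≤ deriv ρ (α+t) * t^2 := u1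
        _ ≤ (lam ^ c₂ * deriv ρ (β+t)) * t^2 := mul_le_mul_of_nonneg_right hfA (sq_nonneg t)
        _ = lam ^ c₂ * (deriv ρ (β+t) * t^2) := by ring
        _ ≤ lam ^ c₂ * (K * 4 * (shiftN ρ β t * (β+t))) := mul_le_mul_of_nonneg_left l1 hlamc0.le
        _ = (4*K*(lam ^ c₂) * shiftN ρ β t) * (β+t) := by ring
    have key2 : shiftN ρ α t * μ ≤ 4*K*(lam ^ c₂) * shiftN ρ β t := by
      apply le_of_mul_le_mul_right _ hB
      calc shiftN ρ α t * μ * (β+t) = shiftN ρ α t * (μ*(β+t)) := by ring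
        _ ≤ (4*K*(lam ^ c₂) * shiftN ρ β t) * (β+t) := key
    have key3 : shiftN ρ α t ≤ C * shiftN ρ β t := by
      have h6 : shiftN ρ α t ≤ (4*K*(lam ^ c₂)/μ) * shiftN ρ β t := by
        rw [div_mul_eq_mul_div, le_div_iff₀ hμ0]
        exact key2
      calc shiftN ρ α t ≤ (4*K*(lam ^ c₂)/μ) * shiftN ρ β t := h6
        _ ≤ C * shiftN ρ β t := mul_le_mul_of_nonneg_right (le_max_right _ _) hXβ
    linarith
  · -- Branch 2 : α much larger than β and t
    have hlamt : lam * t ≤ lam * (β + t) := by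
      apply mul_le_mul_of_nonneg_left (by linarith) (by linarith)
    have hlt : (lam - 1)*t ≤ α := by linarith
    have h3t : 3 * t ≤ (lam - 1) * t := mul_le_mul_of_nonneg_right (by linarith) h0.le
    have hαpos : 0 < α := by linarith
    have ht_le : t ≤ α := by linarith
    have hlamβ : lam * β ≤ α := by linarith
    have h4β : 4 * β ≤ lam * β := mul_le_mul_of_nonneg_right hlam4 hβ
    have hβ4 : 4 * β ≤ α := by linarith
    have hs2' : α ≤ 2*s := by linarith
    have hspos : 0 < s := by linarith
    have hF : 0 ≤ deriv ρ α := fnonneg hN hE hαpos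
    have u1 := shift_upper hN hE hc₁ hα ht
    have u2 : deriv ρ (α+t) ≤ K * deriv ρ α := by
      rw [hKdef]; exact fdouble2 hN hE hc₂ hαpos (by linarith) (by linarith)
    have l1 := shift_lower hN hE hc₁ hc₂ hα hs0
    rw [← hKdef] at l1
    have l2 : deriv ρ α ≤ deriv ρ (α+s) :=
      fmono hN hE hc₁ (mem_Ioi.2 hαpos) (mem_Ioi.2 (by linarith)) (by linarith)
    have A3 : deriv ρ α * α ≤ 24*K*(shiftN ρ α s) := by
      have e1 : deriv ρ α * s * s ≤ (12*K*(shiftN ρ α s)) * s := by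
        calc deriv ρ α * s * s = deriv ρ α * s^2 := by ring
          _ ≤ deriv ρ (α+s) * s^2 := mul_le_mul_of_nonneg_right l2 (sq_nonneg s)
          _ ≤ K * 4 * (shiftN ρ α s * (α+s)) := l1
          _ ≤ K * 4 * (shiftN ρ α s * (3*s)) := by
              apply mul_le_mul_of_nonneg_left _ (mul_nonneg hK0.le (by norm_num))
              exact mul_le_mul_of_nonneg_left (by linarith) hYnn
          _ = (12*K*(shiftN ρ α s)) * s := by ring
      have e2 : deriv ρ α * s ≤ 12*K*(shiftN ρ α s) := le_of_mul_le_mul_right e1 hspos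
      calc deriv ρ α * α ≤ deriv ρ α * (2*s) := mul_le_mul_of_nonneg_left (by linarith) hF
        _ = 2*(deriv ρ α * s) := by ring
        _ ≤ 2*(12*K*(shiftN ρ α s)) := by linarith
        _ = 24*K*(shiftN ρ α s) := by ring
    have A1 : shiftN ρ α t * α ≤ K * deriv ρ α * t^2 := by
      calc shiftN ρ α t * α ≤ shiftN ρ α t * (α+t) :=
            mul_le_mul_of_nonneg_left (by linarith) hXnn
        _ ≤ deriv ρ (α+t) * t^2 := u1
        _ ≤ (K * deriv ρ α) * t^2 := mul_le_mul_of_nonneg_right u2 (sq_nonneg t)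
    have A2 : (lam-1)^2 * t^2 ≤ α^2 := by
      have h := mul_le_mul hlt hlt (mul_nonneg (by linarith : (0:ℝ) ≤ lam - 1) h0.le) hα
      calc (lam-1)^2 * t^2 = ((lam-1)*t)*((lam-1)*t) := by ring
        _ ≤ α * α := h
        _ = α^2 := by ring
    have hfinal : shiftN ρ α t * (α * (lam-1)^2) ≤ (δ * shiftN ρ α s) * (α * (lam-1)^2) := by
      calc shiftN ρ α t * (α*(lam-1)^2) = (shiftN ρ α t * α)*(lam-1)^2 := by ring
        _ ≤ (K * deriv ρ α * t^2)*(lam-1)^2 := mul_le_mul_of_nonneg_right A1 (sq_nonneg _)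
        _ = (K * deriv ρ α)*((lam-1)^2*t^2) := by ring
        _ ≤ (K * deriv ρ α)*α^2 := mul_le_mul_of_nonneg_left A2 (mul_nonneg hK0.le hF)
        _ = (deriv ρ α * α)*(K*α) := by ring
        _ ≤ (24*K*(shiftN ρ α s))*(K*α) := mul_le_mul_of_nonneg_right A3 (mul_nonneg hK0.le hα)
        _ = (24*K*K)*(shiftN ρ α s * α) := by ring
        _ ≤ (δ*(lam-1)^2)*(shiftN ρ α s * α) :=
            mul_le_mul_of_nonneg_right hlamδ (mul_nonneg hYnn hα)
        _ = (δ * shiftN ρ α s)*(α*(lam-1)^2) := by ring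
    have hpos : 0 < α * (lam-1)^2 :=
      mul_pos hαpos (pow_pos (by linarith : (0:ℝ) < lam - 1) 2)
    have := le_of_mul_le_mul_right hfinal hpos
    linarith
end
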